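/- Let p be a prime, θ, q ∈ ℚ_p with 0 < |θ−1|_p < |q|_p < 1, and f(x) = ((θx+q−1)/(x+θ+q−2))³. Suppose x1 is a fixed point of f of the form x1 = x∞ + (θ−1)y1 with |y1|_p = 1, where x∞ = 2−θ−q. Then |f'(x1)|_p = |3|_p·|q|_p/|θ−1|_p; in particular, for p ∉ {3}, |f'(x1)|_p = |q|_p/|θ−1|_p > 1, so x1 is a repelling fixed point. -/

import Mathlib

/-- At a fixed point `x₁ = x∞ + (θ-1)y₁` with `‖y₁‖ = 1`, the derivative of the
Potts–Bethe mapping satisfies `‖f'(x₁)‖ = ‖3‖·‖q‖/‖θ-1‖`; for `p ≠ 3` this is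
`‖q‖/‖θ-1‖ > 1`, so `x₁` is repelling. -/
theorem pottsBethe_deriv_at_x1 (p : ℕ) [Fact p.Prime]
    (θ q : ℚ_[p]) (h1 : 0 < ‖θ - 1‖) (h2 : ‖θ - 1‖ < ‖q‖) (h3 : ‖q‖ < 1)
    (y1 x1 : ℚ_[p]) (hy1 : ‖y1‖ = 1) (hx1 : x1 = (2 - θ - q) + (θ - 1) * y1)
    (hfix : ((θ * x1 + q - 1) / (x1 + θ + q - 2)) ^ 3 = x1) :
    ‖deriv (fun x : ℚ_[p] => ((θ * x + q - 1) / (x + θ + q - 2)) ^ 3) x1‖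
      = ‖(3 : ℚ_[p])‖ * ‖q‖ / ‖θ - 1‖ ∧
    (p ≠ 3 →
      ‖deriv (fun x : ℚ_[p] => ((θ * x + q - 1) / (x + θ + q - 2)) ^ 3) x1‖
        = ‖q‖ / ‖θ - 1‖ ∧
      1 < ‖deriv (fun x : ℚ_[p] => ((θ * x + q - 1) / (x + θ + q - 2)) ^ 3) x1‖) := by
  have haz : θ - 1 ≠ 0 := by
    intro h; rw [h] at h1; simp at h1
  have hy1z : y1 ≠ 0 := by
    intro h; rw [h] at hy1; simp at hy1
  have eD : x1 + θ + q - 2 = (θ - 1) * y1 := by rw [hx1]; ring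
  have hD : x1 + θ + q - 2 ≠ 0 := by
    rw [eD]; exact mul_ne_zero haz hy1z
  have eN : θ * x1 + q - 1 = (θ - 1) * (θ * y1 + (1 - θ - q)) := by rw [hx1]; ring
  -- derivative computation
  have hNd : HasDerivAt (fun x : ℚ_[p] => θ * x + q - 1) θ x1 := by
    have h0 : (fun x : ℚ_[p] => θ * x + q - 1) = fun x => θ * x + (q - 1) := by
      funext x; ring
    rw [h0]
    simpa using ((hasDerivAt_id x1).const_mul θ).add_const (q - 1)
  have hDd : HasDerivAt (fun x : ℚ_[p] => x + θ + q - 2) 1 x1 := by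
    have h0 : (fun x : ℚ_[p] => x + θ + q - 2) = fun x => x + (θ + q - 2) := by
      funext x; ring
    rw [h0]
    simpa using (hasDerivAt_id x1).add_const (θ + q - 2)
  have hg : HasDerivAt (fun x : ℚ_[p] => (θ * x + q - 1) / (x + θ + q - 2))
      ((θ * (x1 + θ + q - 2) - (θ * x1 + q - 1) * 1) / (x1 + θ + q - 2) ^ 2) x1 :=
    hNd.div hDd hD
  have hf : HasDerivAt (fun x : ℚ_[p] => ((θ * x + q - 1) / (x + θ + q - 2)) ^ 3)
      ((3 : ℕ) * ((θ * x1 + q - 1) / (x1 + θ + q - 2)) ^ (3 - 1) *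
        ((θ * (x1 + θ + q - 2) - (θ * x1 + q - 1) * 1) / (x1 + θ + q - 2) ^ 2)) x1 :=
    hg.pow 3
  have hder := hf.deriv
  have hsimp : deriv (fun x : ℚ_[p] => ((θ * x + q - 1) / (x + θ + q - 2)) ^ 3) x1
      = 3 * (θ * y1 + (1 - θ - q)) ^ 2 * ((θ - 1) + q) / ((θ - 1) * y1 ^ 4) := by
    rw [hder, eD, eN]
    have hM : θ * ((θ - 1) * y1) - (θ - 1) * (θ * y1 + (1 - θ - q)) * 1
        = (θ - 1) * ((θ - 1) + q) := by ring
    rw [hM]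
    field_simp
    rw [show (3:ℕ) - 1 = 2 from rfl, div_pow]
    field_simp
    push_cast
    ring
  -- norm facts
  have hθ : ‖θ‖ = 1 := by
    have h0 : θ = 1 + (θ - 1) := by ring
    rw [h0, Padic.add_eq_max_of_ne (by
      rw [norm_one]
      exact fun h => absurd h.symm (ne_of_lt (lt_trans h2 h3)))]
    rw [norm_one]
    exact max_eq_left (le_of_lt (lt_trans h2 h3))
  have haq : ‖(θ - 1) + q‖ = ‖q‖ := by
    rw [Padic.add_eq_max_of_ne (ne_of_lt h2)]
    exact max_eq_right (le_of_lt h2)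
  have hT : ‖θ * y1 + (1 - θ - q)‖ = 1 := by
    have h0 : (1 : ℚ_[p]) - θ - q = -((θ - 1) + q) := by ring
    have h1' : ‖θ * y1‖ = 1 := by rw [norm_mul, hθ, hy1, one_mul]
    have h2' : ‖(1 : ℚ_[p]) - θ - q‖ = ‖q‖ := by rw [h0, norm_neg, haq]
    rw [Padic.add_eq_max_of_ne (by rw [h1', h2']; exact (ne_of_lt h3).symm),
      h1', h2']
    exact max_eq_left (le_of_lt h3)
  have hmain : ‖deriv (fun x : ℚ_[p] => ((θ * x + q - 1) / (x + θ + q - 2)) ^ 3) x1‖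
      = ‖(3 : ℚ_[p])‖ * ‖q‖ / ‖θ - 1‖ := by
    rw [hsimp, norm_div, norm_mul, norm_mul, norm_pow, norm_mul, norm_pow, hT, haq,
      hy1]
    ring
  refine ⟨hmain, fun hp => ?_⟩
  have h3n : ‖(3 : ℚ_[p])‖ = 1 := by
    have hle : ‖((3 : ℤ) : ℚ_[p])‖ ≤ 1 := Padic.norm_int_le_one 3
    have hnlt : ¬ ‖((3 : ℤ) : ℚ_[p])‖ < 1 := by
      rw [Padic.norm_intCast_lt_one_iff]
      intro hdvd
      have : p ∣ 3 := by exact_mod_cast hdvd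
      exact hp ((Nat.prime_dvd_prime_iff_eq (Fact.out : p.Prime) (by norm_num)).mp this)
    have : ‖((3 : ℤ) : ℚ_[p])‖ = 1 := le_antisymm hle (not_lt.mp hnlt)
    simpa using this
  have heq : ‖deriv (fun x : ℚ_[p] => ((θ * x + q - 1) / (x + θ + q - 2)) ^ 3) x1‖
      = ‖q‖ / ‖θ - 1‖ := by rw [hmain, h3n, one_mul]
  refine ⟨heq, ?_⟩
  rw [heq]
  rw [lt_div_iff₀ h1, one_mul]
  exact h2
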